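/- For 1 < p < ∞ and the complex interpolation space S_p^k = [P_N^k(H), P_A^k(H)]_θ with p(1−θ)=1 on a Hilbert space H: if the product maps P_N^k × P_N^l → P_N^{k+l} and P_A^k × P_A^l → P_A^{k+l} are bounded bilinear with norms c_{k,l}^N and c_{k,l}^A respectively, then the product map S_p^k × S_p^l → S_p^{k+l} is bounded bilinear with norm at most (c_{k,l}^N)^{1−θ}(c_{k,l}^A)^θ. -/

import Mathlib

open Complex in
/-- The complex interpolation norm `[n₀, n₁]_θ` of the compatible couple of norms `n₀, n₁`
on a common (dense) subspace `V`, computed by Calderón's formula over finite-rank analytic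
functions `F(z) = Σᵢ φᵢ(z) vᵢ` on the closed strip `0 ≤ Re z ≤ 1` (bounded, continuous on
the closed strip, analytic in its interior) with `F(θ) = x`:
`inf { max-boundary-bound M }`. -/
noncomputable def interpNorm {V : Type*} [AddCommGroup V] [Module ℂ V]
    (n0 n1 : V → ℝ) (θ : ℝ) (x : V) : ℝ :=
  sInf { M : ℝ | ∃ (N : ℕ) (φ : Fin N → ℂ → ℂ) (v : Fin N → V),
    (∀ i, ContinuousOn (φ i) {z : ℂ | 0 ≤ z.re ∧ z.re ≤ 1} ∧
        DifferentiableOn ℂ (φ i) {z : ℂ | 0 < z.re ∧ z.re < 1} ∧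
        ∃ B : ℝ, ∀ z ∈ {z : ℂ | 0 ≤ z.re ∧ z.re ≤ 1}, ‖φ i z‖ ≤ B) ∧
    (∑ i, φ i (θ : ℂ) • v i) = x ∧
    (∀ t : ℝ, n0 (∑ i, φ i (I * t) • v i) ≤ M) ∧
    (∀ t : ℝ, n1 (∑ i, φ i (1 + I * t) • v i) ≤ M) }

open Complex

noncomputable def interpSet {V : Type*} [AddCommGroup V] [Module ℂ V]
    (n0 n1 : V → ℝ) (θ : ℝ) (x : V) : Set ℝ :=
  { M : ℝ | ∃ (N : ℕ) (φ : Fin N → ℂ → ℂ) (v : Fin N → V),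
    (∀ i, ContinuousOn (φ i) {z : ℂ | 0 ≤ z.re ∧ z.re ≤ 1} ∧
        DifferentiableOn ℂ (φ i) {z : ℂ | 0 < z.re ∧ z.re < 1} ∧
        ∃ B : ℝ, ∀ z ∈ {z : ℂ | 0 ≤ z.re ∧ z.re ≤ 1}, ‖φ i z‖ ≤ B) ∧
    (∑ i, φ i (θ : ℂ) • v i) = x ∧
    (∀ t : ℝ, n0 (∑ i, φ i (I * t) • v i) ≤ M) ∧
    (∀ t : ℝ, n1 (∑ i, φ i (1 + I * t) • v i) ≤ M) }

lemma interpNorm_eq_sInf {V : Type*} [AddCommGroup V] [Module ℂ V]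
    (n0 n1 : V → ℝ) (θ : ℝ) (x : V) :
    interpNorm n0 n1 θ x = sInf (interpSet n0 n1 θ x) := rfl

lemma interpSet_nonneg {V : Type*} [AddCommGroup V] [Module ℂ V]
    (n0 n1 : Seminorm ℂ V) (θ : ℝ) (x : V) :
    ∀ M ∈ interpSet (fun v => n0 v) (fun v => n1 v) θ x, 0 ≤ M := by
  rintro M ⟨N, φ, v, -, -, h0, -⟩
  exact le_trans (apply_nonneg n0 _) (h0 0)

lemma interpSet_bddBelow {V : Type*} [AddCommGroup V] [Module ℂ V]
    (n0 n1 : Seminorm ℂ V) (θ : ℝ) (x : V) :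
    BddBelow (interpSet (fun v => n0 v) (fun v => n1 v) θ x) :=
  ⟨0, fun M hM => interpSet_nonneg n0 n1 θ x M hM⟩

lemma interpSet_nonempty {V : Type*} [AddCommGroup V] [Module ℂ V]
    (n0 n1 : Seminorm ℂ V) (θ : ℝ) (x : V) :
    (interpSet (fun v => n0 v) (fun v => n1 v) θ x).Nonempty := by
  refine ⟨max (n0 x) (n1 x), 1, fun _ _ => 1, fun _ => x, ?_, by simp, ?_, ?_⟩
  · intro i
    exact ⟨continuousOn_const, differentiableOn_const _, 1, fun z _ => by norm_num⟩
  · intro t; simpa using le_max_left (n0 x) (n1 x)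
  · intro t; simpa using le_max_right (n0 x) (n1 x)

lemma interpNorm_nonneg {V : Type*} [AddCommGroup V] [Module ℂ V]
    (n0 n1 : Seminorm ℂ V) (θ : ℝ) (x : V) :
    0 ≤ interpNorm (fun v => n0 v) (fun v => n1 v) θ x :=
  Real.sInf_nonneg (interpSet_nonneg n0 n1 θ x)

lemma key_sum {Vk Vl Vkl : Type*}
    [AddCommGroup Vk] [Module ℂ Vk] [AddCommGroup Vl] [Module ℂ Vl]
    [AddCommGroup Vkl] [Module ℂ Vkl] {N1 N2 : ℕ}
    (mul : Vk →ₗ[ℂ] Vl →ₗ[ℂ] Vkl) (g : ℂ → ℂ) (φ : Fin N1 → ℂ → ℂ) (ψ : Fin N2 → ℂ → ℂ)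
    (v : Fin N1 → Vk) (w : Fin N2 → Vl) (z : ℂ) :
    (∑ k : Fin (N1 * N2),
        (g z * (φ (finProdFinEquiv.symm k).1 z * ψ (finProdFinEquiv.symm k).2 z)) •
          mul (v (finProdFinEquiv.symm k).1) (w (finProdFinEquiv.symm k).2))
      = g z • mul (∑ i, φ i z • v i) (∑ j, ψ j z • w j) := by
  have h1 : (∑ k : Fin (N1 * N2),
        (g z * (φ (finProdFinEquiv.symm k).1 z * ψ (finProdFinEquiv.symm k).2 z)) •
          mul (v (finProdFinEquiv.symm k).1) (w (finProdFinEquiv.symm k).2))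
      = ∑ p : Fin N1 × Fin N2, (g z * (φ p.1 z * ψ p.2 z)) • mul (v p.1) (w p.2) :=
    by
      refine (Fintype.sum_equiv (finProdFinEquiv : Fin N1 × Fin N2 ≃ Fin (N1 * N2))
        _ _ ?_).symm
      intro p
      simp
  rw [h1, Fintype.sum_prod_type]
  simp only [map_sum, LinearMap.sum_apply, map_smul, LinearMap.smul_apply,
    Finset.smul_sum, smul_smul]
  rw [Finset.sum_comm]
  refine Finset.sum_congr rfl fun j _ => ?_
  refine Finset.sum_congr rfl fun i _ => ?_
  congr 1
  ring

/-- The key construction: multiplying two competitors. -/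
lemma mul_mem_interpSet {Vk Vl Vkl : Type*}
    [AddCommGroup Vk] [Module ℂ Vk] [AddCommGroup Vl] [Module ℂ Vl]
    [AddCommGroup Vkl] [Module ℂ Vkl]
    (nNk nAk : Seminorm ℂ Vk) (nNl nAl : Seminorm ℂ Vl) (nNkl nAkl : Seminorm ℂ Vkl)
    (mul : Vk →ₗ[ℂ] Vl →ₗ[ℂ] Vkl)
    (θ : ℝ) (hθ0 : 0 < θ) (hθ1 : θ < 1)
    (cN cA : ℝ) (hcN : 0 < cN) (hcA : 0 < cA)
    (hN : ∀ (x : Vk) (y : Vl), nNkl (mul x y) ≤ cN * nNk x * nNl y)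
    (hA : ∀ (x : Vk) (y : Vl), nAkl (mul x y) ≤ cA * nAk x * nAl y)
    (x : Vk) (y : Vl) (Mx My : ℝ)
    (hMx : Mx ∈ interpSet (fun v => nNk v) (fun v => nAk v) θ x)
    (hMy : My ∈ interpSet (fun v => nNl v) (fun v => nAl v) θ y) :
    cN ^ (1 - θ) * cA ^ θ * (Mx * My) ∈
      interpSet (fun v => nNkl v) (fun v => nAkl v) θ (mul x y) := by
  have hMx0 : 0 ≤ Mx := interpSet_nonneg nNk nAk θ x Mx hMx
  have hMy0 : 0 ≤ My := interpSet_nonneg nNl nAl θ y My hMy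
  obtain ⟨N1, φ, v, hφ, hφθ, hφ0, hφ1⟩ := hMx
  obtain ⟨N2, ψ, w, hψ, hψθ, hψ0, hψ1⟩ := hMy
  set g : ℂ → ℂ := fun z =>
    Complex.exp ((z - (θ : ℂ)) * (Real.log cN : ℂ) + ((θ : ℂ) - z) * (Real.log cA : ℂ)) with hg
  have hg_diff : Differentiable ℂ g := by
    apply Differentiable.cexp
    exact ((differentiable_id.sub (differentiable_const _)).mul (differentiable_const _)).add
      (((differentiable_const _).sub differentiable_id).mul (differentiable_const _))
  have hg_cont : Continuous g := hg_diff.continuous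
  have hg_norm : ∀ z : ℂ,
      ‖g z‖ = Real.exp ((z.re - θ) * Real.log cN + (θ - z.re) * Real.log cA) := by
    intro z
    rw [hg]
    simp only [Complex.norm_exp]
    congr 1
    simp [Complex.add_re, Complex.mul_re, Complex.sub_re, Complex.sub_im,
      Complex.ofReal_re, Complex.ofReal_im]
  have hgθ : g (θ : ℂ) = 1 := by
    rw [hg]; simp
  have hg0 : ∀ t : ℝ, ‖g (I * t)‖ = cN ^ (-θ) * cA ^ θ := by
    intro t
    rw [hg_norm, Real.rpow_def_of_pos hcN, Real.rpow_def_of_pos hcA, ← Real.exp_add]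
    congr 1
    simp [Complex.mul_re]
    ring
  have hg1 : ∀ t : ℝ, ‖g (1 + I * t)‖ = cN ^ (1 - θ) * cA ^ (θ - 1) := by
    intro t
    rw [hg_norm, Real.rpow_def_of_pos hcN, Real.rpow_def_of_pos hcA, ← Real.exp_add]
    congr 1
    simp [Complex.add_re, Complex.mul_re]
    ring
  have hg_bdd : ∀ z ∈ {z : ℂ | 0 ≤ z.re ∧ z.re ≤ 1},
      ‖g z‖ ≤ Real.exp (|Real.log cN| + |Real.log cA|) := by
    intro z hz
    rw [hg_norm]
    apply Real.exp_le_exp.2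
    have h1 : |z.re - θ| ≤ 1 := abs_le.2 ⟨by linarith [hz.1], by linarith [hz.2]⟩
    have h2 : |θ - z.re| ≤ 1 := by rw [abs_sub_comm]; exact h1
    have e1 : (z.re - θ) * Real.log cN ≤ |Real.log cN| :=
      calc (z.re - θ) * Real.log cN ≤ |(z.re - θ) * Real.log cN| := le_abs_self _
        _ = |z.re - θ| * |Real.log cN| := abs_mul _ _
        _ ≤ 1 * |Real.log cN| := mul_le_mul_of_nonneg_right h1 (abs_nonneg _)
        _ = |Real.log cN| := one_mul _
    have e2 : (θ - z.re) * Real.log cA ≤ |Real.log cA| :=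
      calc (θ - z.re) * Real.log cA ≤ |(θ - z.re) * Real.log cA| := le_abs_self _
        _ = |θ - z.re| * |Real.log cA| := abs_mul _ _
        _ ≤ 1 * |Real.log cA| := mul_le_mul_of_nonneg_right h2 (abs_nonneg _)
        _ = |Real.log cA| := one_mul _
    linarith
  refine ⟨N1 * N2,
    fun k z => g z * (φ (finProdFinEquiv.symm k).1 z * ψ (finProdFinEquiv.symm k).2 z),
    fun k => mul (v (finProdFinEquiv.symm k).1) (w (finProdFinEquiv.symm k).2), ?_, ?_, ?_, ?_⟩
  · intro k
    obtain ⟨hφc, hφd, Bφ, hBφ⟩ := hφ (finProdFinEquiv.symm k).1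
    obtain ⟨hψc, hψd, Bψ, hBψ⟩ := hψ (finProdFinEquiv.symm k).2
    refine ⟨hg_cont.continuousOn.mul (hφc.mul hψc),
      (hg_diff.differentiableOn).mul (hφd.mul hψd),
      Real.exp (|Real.log cN| + |Real.log cA|) * (Bφ * Bψ), ?_⟩
    intro z hz
    have hBφ0 : 0 ≤ Bφ := le_trans (norm_nonneg _) (hBφ 0 (by norm_num))
    have hzφ := hBφ z hz
    have hzψ := hBψ z hz
    calc ‖g z * (φ (finProdFinEquiv.symm k).1 z * ψ (finProdFinEquiv.symm k).2 z)‖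
        = ‖g z‖ * (‖φ (finProdFinEquiv.symm k).1 z‖ * ‖ψ (finProdFinEquiv.symm k).2 z‖) := by
          rw [norm_mul, norm_mul]
      _ ≤ Real.exp (|Real.log cN| + |Real.log cA|) * (Bφ * Bψ) :=
          mul_le_mul (hg_bdd z hz)
            (mul_le_mul hzφ hzψ (norm_nonneg _) hBφ0)
            (mul_nonneg (norm_nonneg _) (norm_nonneg _)) (Real.exp_nonneg _)
  · rw [key_sum mul g φ ψ v w (θ : ℂ), hφθ, hψθ, hgθ, one_smul]
  · intro t
    have hkey := key_sum mul g φ ψ v w (I * t)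
    simp only []
    rw [hkey]
    have hsmul : nNkl (g (I * t) • mul (∑ i, φ i (I * t) • v i) (∑ j, ψ j (I * t) • w j))
        = ‖g (I * t)‖ * nNkl (mul (∑ i, φ i (I * t) • v i) (∑ j, ψ j (I * t) • w j)) :=
      map_smul_eq_mul nNkl _ _
    rw [hsmul, hg0 t]
    have hb : nNkl (mul (∑ i, φ i (I * t) • v i) (∑ j, ψ j (I * t) • w j))
        ≤ cN * Mx * My :=
      le_trans (hN _ _)
        (mul_le_mul (mul_le_mul le_rfl (hφ0 t) (apply_nonneg _ _) hcN.le)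
          (hψ0 t) (apply_nonneg _ _) (by positivity))
    calc cN ^ (-θ) * cA ^ θ * nNkl (mul (∑ i, φ i (I * t) • v i) (∑ j, ψ j (I * t) • w j))
        ≤ cN ^ (-θ) * cA ^ θ * (cN * Mx * My) :=
          mul_le_mul_of_nonneg_left hb (by positivity)
      _ = cN ^ (1 - θ) * cA ^ θ * (Mx * My) := by
          rw [show (1 - θ : ℝ) = -θ + 1 by ring, Real.rpow_add hcN, Real.rpow_one]
          ring
  · intro t
    have hkey := key_sum mul g φ ψ v w (1 + I * t)
    simp only []
    rw [hkey]
    have hsmul : nAkl (g (1 + I * t) •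
          mul (∑ i, φ i (1 + I * t) • v i) (∑ j, ψ j (1 + I * t) • w j))
        = ‖g (1 + I * t)‖ *
          nAkl (mul (∑ i, φ i (1 + I * t) • v i) (∑ j, ψ j (1 + I * t) • w j)) :=
      map_smul_eq_mul nAkl _ _
    rw [hsmul, hg1 t]
    have hb : nAkl (mul (∑ i, φ i (1 + I * t) • v i) (∑ j, ψ j (1 + I * t) • w j))
        ≤ cA * Mx * My :=
      le_trans (hA _ _)
        (mul_le_mul (mul_le_mul le_rfl (hφ1 t) (apply_nonneg _ _) hcA.le)
          (hψ1 t) (apply_nonneg _ _) (by positivity))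
    calc cN ^ (1 - θ) * cA ^ (θ - 1) *
          nAkl (mul (∑ i, φ i (1 + I * t) • v i) (∑ j, ψ j (1 + I * t) • w j))
        ≤ cN ^ (1 - θ) * cA ^ (θ - 1) * (cA * Mx * My) :=
          mul_le_mul_of_nonneg_left hb (by positivity)
      _ = cN ^ (1 - θ) * cA ^ θ * (Mx * My) := by
          rw [show (θ : ℝ) = (θ - 1) + 1 by ring, Real.rpow_add hcA, Real.rpow_one]
          ring_nf

theorem stmt_19 {Vk Vl Vkl : Type*}
    [AddCommGroup Vk] [Module ℂ Vk] [AddCommGroup Vl] [Module ℂ Vl]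
    [AddCommGroup Vkl] [Module ℂ Vkl]
    (nNk nAk : Seminorm ℂ Vk) (nNl nAl : Seminorm ℂ Vl) (nNkl nAkl : Seminorm ℂ Vkl)
    (mul : Vk →ₗ[ℂ] Vl →ₗ[ℂ] Vkl)
    (p θ : ℝ) (hp : 1 < p) (hθ0 : 0 < θ) (hθ1 : θ < 1) (hpθ : p * (1 - θ) = 1)
    (cN cA : ℝ) (hcN : 0 < cN) (hcA : 0 < cA)
    (hN : ∀ (x : Vk) (y : Vl), nNkl (mul x y) ≤ cN * nNk x * nNl y)
    (hA : ∀ (x : Vk) (y : Vl), nAkl (mul x y) ≤ cA * nAk x * nAl y) :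
    ∀ (x : Vk) (y : Vl),
      interpNorm (fun v => nNkl v) (fun v => nAkl v) θ (mul x y) ≤
        cN ^ (1 - θ) * cA ^ θ *
          (interpNorm (fun v => nNk v) (fun v => nAk v) θ x *
            interpNorm (fun v => nNl v) (fun v => nAl v) θ y) := by
  intro x y
  set A := interpNorm (fun v => nNk v) (fun v => nAk v) θ x with hAdef
  set B := interpNorm (fun v => nNl v) (fun v => nAl v) θ y with hBdef
  have hA0 : 0 ≤ A := interpNorm_nonneg nNk nAk θ x
  have hB0 : 0 ≤ B := interpNorm_nonneg nNl nAl θ y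
  have key : ∀ ε : ℝ, 0 < ε →
      interpNorm (fun v => nNkl v) (fun v => nAkl v) θ (mul x y) ≤
        cN ^ (1 - θ) * cA ^ θ * ((A + ε) * (B + ε)) := by
    intro ε hε
    have hx : sInf (interpSet (fun v => nNk v) (fun v => nAk v) θ x) < A + ε := by
      rw [hAdef, interpNorm_eq_sInf]; linarith
    have hy : sInf (interpSet (fun v => nNl v) (fun v => nAl v) θ y) < B + ε := by
      rw [hBdef, interpNorm_eq_sInf]; linarith
    obtain ⟨Mx, hMxS, hMxlt⟩ := exists_lt_of_csInf_lt (interpSet_nonempty nNk nAk θ x) hx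
    obtain ⟨My, hMyS, hMylt⟩ := exists_lt_of_csInf_lt (interpSet_nonempty nNl nAl θ y) hy
    have hMx0 : 0 ≤ Mx := interpSet_nonneg nNk nAk θ x Mx hMxS
    have hMy0 : 0 ≤ My := interpSet_nonneg nNl nAl θ y My hMyS
    have hmem := mul_mem_interpSet nNk nAk nNl nAl nNkl nAkl mul θ hθ0 hθ1
      cN cA hcN hcA hN hA x y Mx My hMxS hMyS
    have hle := csInf_le (interpSet_bddBelow nNkl nAkl θ (mul x y)) hmem
    rw [interpNorm_eq_sInf]
    refine le_trans hle ?_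
    have : Mx * My ≤ (A + ε) * (B + ε) :=
      mul_le_mul hMxlt.le hMylt.le hMy0 (by linarith)
    exact mul_le_mul_of_nonneg_left this (by positivity)
  have hlim : Filter.Tendsto (fun ε : ℝ => cN ^ (1 - θ) * cA ^ θ * ((A + ε) * (B + ε)))
      (nhdsWithin 0 (Set.Ioi 0)) (nhds (cN ^ (1 - θ) * cA ^ θ * (A * B))) := by
    have hc : Continuous (fun ε : ℝ => cN ^ (1 - θ) * cA ^ θ * ((A + ε) * (B + ε))) := by
      continuity
    have := hc.tendsto 0
    simp only [add_zero] at this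
    exact this.mono_left nhdsWithin_le_nhds
  exact ge_of_tendsto hlim
    (Filter.eventually_of_mem self_mem_nhdsWithin fun ε hε => key ε hε)
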